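/- For a nondecreasing bounded function μ on [0,1] with μ(1) - μ(0) = 1, the function F(z) = √(1+z)·∫₀¹ dμ(u)/(1+zu) is holomorphic on H = ℂ∖(-∞,-1], maps H into the right half-plane, and is positive on (-1,+∞). -/

import Mathlib

open Complex MeasureTheory



lemma re_half_pos {w : ℂ} (hw : w ∈ Complex.slitPlane) : 0 < (w ^ ((1:ℂ)/2)).re := by
  have hw0 : w ≠ 0 := Complex.slitPlane_ne_zero hw
  rw [Complex.cpow_def_of_ne_zero hw0, Complex.exp_re]
  have him : (Complex.log w * ((1:ℂ)/2)).im = w.arg / 2 := by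
    simp [Complex.mul_im, Complex.log_im]
    ring
  rw [him]
  have h1 : -Real.pi < w.arg := Complex.neg_pi_lt_arg w
  have h2 : w.arg < Real.pi := Complex.arg_lt_pi_iff.mpr (by
    rcases Complex.mem_slitPlane_iff.mp hw with h | h
    · exact Or.inl h.le
    · exact Or.inr h)
  have : 0 < Real.cos (w.arg / 2) := Real.cos_pos_of_mem_Ioo ⟨by linarith, by linarith⟩
  positivity

lemma memH_slit {z : ℂ} (hz : ¬(z.im = 0 ∧ z.re ≤ -1)) : 1 + z ∈ Complex.slitPlane := by
  rw [Complex.mem_slitPlane_iff]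
  push_neg at hz
  by_cases h : z.im = 0
  · left; have := hz h; simp [Complex.add_re]; linarith
  · right; simpa using h

lemma key_ne {z : ℂ} (hz : ¬(z.im = 0 ∧ z.re ≤ -1)) {u : ℝ} (hu : u ∈ Set.Icc (0:ℝ) 1) :
    1 + z * (u:ℂ) ≠ 0 := by
  intro h
  rcases hu with ⟨hu0, hu1⟩
  have hune : u ≠ 0 := by
    rintro rfl; simp at h
  have hz' : z = -(u⁻¹ : ℝ) := by
    have : z * (u:ℂ) = -1 := by linear_combination h
    field_simp at this ⊢
    have hu' : (u:ℂ) ≠ 0 := by exact_mod_cast hune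
    push_cast
    field_simp
    linear_combination this
  apply hz
  constructor
  · rw [hz']; simp
  · rw [hz']
    simp only [Complex.neg_re, Complex.ofReal_re]
    have hu0' : 0 < u := lt_of_le_of_ne hu0 (Ne.symm hune)
    have : 1 ≤ u⁻¹ := (one_le_inv₀ hu0').mpr hu1
    linarith

lemma key_pos {z : ℂ} (hz : ¬(z.im = 0 ∧ z.re ≤ -1)) {u : ℝ} (hu : u ∈ Set.Icc (0:ℝ) 1) :
    0 < ((1 + z) ^ ((1:ℂ)/2) * (1 + z * (u:ℂ))⁻¹).re := by
  set c : ℂ := (1 + z) ^ ((1:ℂ)/2) with hc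
  have hslit : 1 + z ∈ Complex.slitPlane := memH_slit hz
  have hcre : 0 < c.re := re_half_pos hslit
  have hc2 : c ^ 2 = 1 + z := by
    rw [hc]
    have := Complex.cpow_nat_inv_pow (1 + z) (n := 2) two_ne_zero
    simpa [one_div] using this
  set w : ℂ := 1 + z * (u:ℂ) with hwdef
  have hw0 : w ≠ 0 := key_ne hz hu
  have hwc : w = ((1 - u : ℝ) : ℂ) + (u:ℂ) * c ^ 2 := by
    rw [hc2, hwdef]; push_cast; ring
  have hrec : (c * (starRingEnd ℂ) w).re = ((1 - u) + u * Complex.normSq c) * c.re := by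
    rw [hwc]
    simp only [map_add, map_mul, Complex.conj_ofReal, map_pow]
    have : c * (((1 - u : ℝ):ℂ) + (u:ℂ) * ((starRingEnd ℂ) c) ^ 2)
        = ((1 - u : ℝ):ℂ) * c + (u:ℂ) * ((Complex.normSq c : ℝ) : ℂ) * (starRingEnd ℂ) c := by
      rw [show (u:ℂ) * ((Complex.normSq c : ℝ) : ℂ) * (starRingEnd ℂ) c
            = (u:ℂ) * (c * (starRingEnd ℂ) c) * (starRingEnd ℂ) c by rw [Complex.mul_conj]]
      ring
    rw [this]
    simp [Complex.add_re, Complex.mul_re, Complex.conj_re, Complex.conj_im]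
    ring
  have hinv : w⁻¹ = (starRingEnd ℂ) w * ((Complex.normSq w : ℝ) : ℂ)⁻¹ := by
    rw [Complex.inv_def]; norm_cast
  have hns : 0 < Complex.normSq w := Complex.normSq_pos.mpr hw0
  have hre : (c * w⁻¹).re = (c * (starRingEnd ℂ) w).re * (Complex.normSq w)⁻¹ := by
    rw [hinv, ← mul_assoc,
      show ((Complex.normSq w : ℝ) : ℂ)⁻¹ = (((Complex.normSq w)⁻¹ : ℝ) : ℂ) by push_cast; ring]
    simp [Complex.mul_re]
  rw [hre, hrec]
  have hcne : c ≠ 0 := by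
    intro h; rw [h] at hcre; simp at hcre
  have hnsc : 0 < Complex.normSq c := Complex.normSq_pos.mpr hcne
  have hcoef : 0 < (1 - u) + u * Complex.normSq c := by
    rcases hu with ⟨h0, h1⟩
    rcases le_or_gt 1 (Complex.normSq c) with h | h
    · nlinarith
    · nlinarith
  positivity

lemma norm_lower {s : Set ℂ} (hsc : IsCompact s) (hne : s.Nonempty)
    (hsH : ∀ z ∈ s, ¬(z.im = 0 ∧ z.re ≤ -1)) :
    ∃ δ > 0, ∀ z ∈ s, ∀ u ∈ Set.Icc (0:ℝ) 1, δ ≤ ‖1 + z * (u:ℂ)‖ := by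
  have hK : IsCompact (s ×ˢ Set.Icc (0:ℝ) 1) := hsc.prod isCompact_Icc
  have hKne : (s ×ˢ Set.Icc (0:ℝ) 1).Nonempty := hne.prod ⟨0, by norm_num⟩
  have hcont : Continuous (fun p : ℂ × ℝ => ‖1 + p.1 * (p.2:ℂ)‖) := by fun_prop
  obtain ⟨p, hp, hmin⟩ := hK.exists_isMinOn hKne hcont.continuousOn
  refine ⟨‖1 + p.1 * (p.2:ℂ)‖, ?_, fun z hz u hu => hmin (a := (z, u)) ⟨hz, hu⟩⟩
  exact norm_pos_iff.mpr (key_ne (hsH p.1 hp.1) hp.2)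

lemma ae_mem_Icc {μ : Measure ℝ} (hsupp : μ (Set.Icc (0:ℝ) 1)ᶜ = 0) :
    ∀ᵐ u ∂μ, u ∈ Set.Icc (0:ℝ) 1 := by
  rw [MeasureTheory.ae_iff]
  exact hsupp

lemma meas_inv (z : ℂ) : Measurable (fun u : ℝ => (1 + z * (u:ℂ))⁻¹) :=
  ((Complex.measurable_ofReal.const_mul z).const_add 1).inv

lemma integrable_inv (μ : Measure ℝ) [IsProbabilityMeasure μ]
    (hsupp : μ (Set.Icc (0:ℝ) 1)ᶜ = 0) {z : ℂ} (hz : ¬(z.im = 0 ∧ z.re ≤ -1)) :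
    Integrable (fun u : ℝ => (1 + z * (u:ℂ))⁻¹) μ := by
  obtain ⟨δ, hδ, hbd⟩ := norm_lower (isCompact_singleton (x := z)) ⟨z, rfl⟩
    (by simpa using hz)
  refine Integrable.mono' (integrable_const δ⁻¹) (meas_inv z).aestronglyMeasurable ?_
  filter_upwards [ae_mem_Icc hsupp] with u hu
  rw [norm_inv]
  exact inv_anti₀ hδ (hbd z rfl u hu)

lemma measure_Icc_pos (μ : Measure ℝ) [IsProbabilityMeasure μ]
    (hsupp : μ (Set.Icc (0:ℝ) 1)ᶜ = 0) : 0 < μ (Set.Icc (0:ℝ) 1) := by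
  rcases eq_or_lt_of_le (show 0 ≤ μ (Set.Icc (0:ℝ) 1) from zero_le) with h | h
  · exfalso
    have : μ Set.univ ≤ μ (Set.Icc (0:ℝ) 1) + μ (Set.Icc (0:ℝ) 1)ᶜ := by
      rw [← Set.union_compl_self (Set.Icc (0:ℝ) 1)]
      exact measure_union_le _ _
    rw [measure_univ, hsupp, ← h] at this
    simp at this
  · exact h

lemma rePos (μ : Measure ℝ) [IsProbabilityMeasure μ]
    (hsupp : μ (Set.Icc (0:ℝ) 1)ᶜ = 0) {z : ℂ} (hz : ¬(z.im = 0 ∧ z.re ≤ -1)) :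
    0 < ((1 + z) ^ ((1:ℂ)/2) * ∫ u : ℝ, (1 + z * (u:ℂ))⁻¹ ∂μ).re := by
  set c : ℂ := (1 + z) ^ ((1:ℂ)/2) with hc
  have hint : Integrable (fun u : ℝ => (1 + z * (u:ℂ))⁻¹) μ := integrable_inv μ hsupp hz
  have hint2 : Integrable (fun u : ℝ => c * (1 + z * (u:ℂ))⁻¹) μ := hint.const_mul c
  have hmul : c * ∫ u : ℝ, (1 + z * (u:ℂ))⁻¹ ∂μ = ∫ u : ℝ, c * (1 + z * (u:ℂ))⁻¹ ∂μ :=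
    (integral_const_mul c _).symm
  have hre : (∫ u : ℝ, c * (1 + z * (u:ℂ))⁻¹ ∂μ).re
      = ∫ u : ℝ, (c * (1 + z * (u:ℂ))⁻¹).re ∂μ := by
    rw [← RCLike.re_eq_complex_re, ← integral_re hint2]
  rw [hmul, hre]
  rw [integral_pos_iff_support_of_nonneg_ae]
  · refine lt_of_lt_of_le (measure_Icc_pos μ hsupp) (measure_mono ?_)
    intro u hu
    exact ne_of_gt (key_pos hz hu)
  · filter_upwards [ae_mem_Icc hsupp] with u hu
    exact (key_pos hz hu).le
  · have := hint2.re
    simpa [RCLike.re_eq_complex_re] using this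

lemma diffAt_integral (μ : Measure ℝ) [IsProbabilityMeasure μ]
    (hsupp : μ (Set.Icc (0:ℝ) 1)ᶜ = 0) {z₀ : ℂ} (hz₀ : ¬(z₀.im = 0 ∧ z₀.re ≤ -1)) :
    DifferentiableAt ℂ (fun z : ℂ => ∫ u : ℝ, (1 + z * (u:ℂ))⁻¹ ∂μ) z₀ := by
  have hHopen : IsOpen {z : ℂ | ¬(z.im = 0 ∧ z.re ≤ -1)} := by
    have : IsClosed {z : ℂ | z.im = 0 ∧ z.re ≤ -1} :=
      ((isClosed_eq Complex.continuous_im continuous_const).inter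
        (isClosed_le Complex.continuous_re continuous_const))
    exact this.isOpen_compl
  obtain ⟨r, hr, hball⟩ := Metric.isOpen_iff.mp hHopen z₀ hz₀
  set ε := r / 2 with hε
  have hεpos : 0 < ε := by positivity
  have hcb : Metric.closedBall z₀ ε ⊆ {z : ℂ | ¬(z.im = 0 ∧ z.re ≤ -1)} :=
    Set.Subset.trans (Metric.closedBall_subset_ball (by linarith)) hball
  obtain ⟨δ, hδ, hbd⟩ := norm_lower (isCompact_closedBall z₀ ε)
    ⟨z₀, Metric.mem_closedBall_self hεpos.le⟩ (fun z hz => hcb hz)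
  have key := hasDerivAt_integral_of_dominated_loc_of_deriv_le (μ := μ)
    (F := fun (z : ℂ) (u : ℝ) => (1 + z * (u:ℂ))⁻¹)
    (F' := fun (z : ℂ) (u : ℝ) => -((u:ℂ) * ((1 + z * (u:ℂ)) ^ 2)⁻¹))
    (x₀ := z₀) (bound := fun _ => δ⁻¹ * δ⁻¹) (Metric.ball_mem_nhds z₀ hεpos)
    (Filter.Eventually.of_forall fun z => (meas_inv z).aestronglyMeasurable)
    (integrable_inv μ hsupp hz₀)
    ?_ ?_ ?_ ?_
  · exact key.2.differentiableAt
  · -- measurability of F' z₀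
    apply Measurable.aestronglyMeasurable
    apply Measurable.neg
    exact Complex.measurable_ofReal.mul
      ((((Complex.measurable_ofReal.const_mul z₀).const_add 1).pow measurable_const).inv)
  · -- bound
    filter_upwards [ae_mem_Icc hsupp] with u hu
    intro z hz
    have hzH : δ ≤ ‖1 + z * (u:ℂ)‖ :=
      hbd z (Metric.ball_subset_closedBall hz) u hu
    rw [norm_neg, norm_mul, norm_inv, norm_pow]
    have hu1 : ‖(u:ℂ)‖ ≤ 1 := by
      rw [Complex.norm_real, Real.norm_eq_abs, abs_le]
      exact ⟨by linarith [hu.1], hu.2⟩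
    calc ‖(u:ℂ)‖ * (‖1 + z * (u:ℂ)‖ ^ 2)⁻¹ ≤ 1 * (‖1 + z * (u:ℂ)‖ ^ 2)⁻¹ := by
          gcongr
      _ ≤ δ⁻¹ * δ⁻¹ := by
          rw [one_mul, sq, mul_inv]
          have h1 : ‖1 + z * (u:ℂ)‖⁻¹ ≤ δ⁻¹ := inv_anti₀ hδ hzH
          exact mul_le_mul h1 h1 (by positivity) (by positivity)
  · exact integrable_const _
  · -- derivative
    filter_upwards [ae_mem_Icc hsupp] with u hu
    intro z hz
    have hne : 1 + z * (u:ℂ) ≠ 0 :=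
      key_ne (hcb (Metric.ball_subset_closedBall hz)) hu
    have h1 : HasDerivAt (fun z : ℂ => 1 + z * (u:ℂ)) (u:ℂ) z := by
      simpa using ((hasDerivAt_id z).mul_const (u:ℂ)).const_add 1
    simpa [div_eq_mul_inv, mul_comm, Pi.inv_def] using h1.inv hne

/-- For a probability measure `μ` on `[0,1] ⊂ ℝ`, the function
`F(z) = √(1+z) · ∫₀¹ dμ(u)/(1+zu)` (principal branch of the square root)
is holomorphic on `H = ℂ ∖ (-∞,-1]`, maps `H` into the right half-plane,
and is positive on `(-1,∞)`. -/
theorem sqrt_stieltjes_transform (μ : Measure ℝ) [IsProbabilityMeasure μ]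
    (hsupp : μ (Set.Icc (0:ℝ) 1)ᶜ = 0) :
    DifferentiableOn ℂ
        (fun z : ℂ => (1 + z) ^ ((1:ℂ)/2) * ∫ u : ℝ, (1 + z * (u:ℂ))⁻¹ ∂μ)
        {z : ℂ | ¬(z.im = 0 ∧ z.re ≤ -1)} ∧
    (∀ z ∈ {z : ℂ | ¬(z.im = 0 ∧ z.re ≤ -1)},
      0 < ((1 + z) ^ ((1:ℂ)/2) * ∫ u : ℝ, (1 + z * (u:ℂ))⁻¹ ∂μ).re) ∧
    (∀ x : ℝ, -1 < x →
      ((1 + (x:ℂ)) ^ ((1:ℂ)/2) * ∫ u : ℝ, (1 + (x:ℂ) * (u:ℂ))⁻¹ ∂μ).im = 0 ∧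
      0 < ((1 + (x:ℂ)) ^ ((1:ℂ)/2) * ∫ u : ℝ, (1 + (x:ℂ) * (u:ℂ))⁻¹ ∂μ).re) := by
  refine ⟨?_, fun z hz => rePos μ hsupp hz, fun x hx => ⟨?_, ?_⟩⟩
  · intro z hz
    apply DifferentiableAt.differentiableWithinAt
    exact (((differentiableAt_const 1).add differentiableAt_id).cpow
      (differentiableAt_const _) (memH_slit hz)).mul (diffAt_integral μ hsupp hz)
  · have h1 : ((1:ℂ) + (x:ℂ)) ^ ((1:ℂ)/2) = ((((1+x) ^ ((1:ℝ)/2) : ℝ)) : ℂ) := by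
      rw [show (1:ℂ) + (x:ℂ) = (((1+x:ℝ)):ℂ) by push_cast; ring]
      rw [Complex.ofReal_cpow (by linarith) ((1:ℝ)/2)]
      push_cast
      ring_nf
    have h2 : ∫ u : ℝ, (1 + (x:ℂ) * (u:ℂ))⁻¹ ∂μ
        = ((∫ u : ℝ, (1 + x*u)⁻¹ ∂μ : ℝ) : ℂ) := by
      have h3 : (fun u : ℝ => (1 + (x:ℂ) * (u:ℂ))⁻¹)
          = fun u : ℝ => (((1 + x*u)⁻¹ : ℝ) : ℂ) := by
        funext u; push_cast; ring
      rw [h3]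
      exact integral_ofReal
    rw [h1, h2, ← Complex.ofReal_mul, Complex.ofReal_im]
  · exact rePos μ hsupp (z := (x:ℂ)) (by
      rintro ⟨-, h⟩
      rw [Complex.ofReal_re] at h
      linarith)
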